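/- Let T be an operator on H = H₁ ⊕ H₂ with block matrix T = [[V, E],[0, X]] where V ∈ B(H₁) and E₀ ∈ B(H₂, H₁) are isometries with ran(E₀) ⊥ ran(V), E = √(1−q) E₀ with 0 < q < 1, and X = √q X₀ with X₀ ∈ B(H₂) an isometry. Then T is a 2-isometry. -/

import Mathlib

open ContinuousLinearMap Filter

/-- The covariance of a bounded operator `T` on a complex Hilbert space:
`cov T = √‖T*T − I‖`. -/
noncomputable def cov {H : Type*} [NormedAddCommGroup H] [InnerProductSpace ℂ H]
    [CompleteSpace H] (T : H →L[ℂ] H) : ℝ :=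
  Real.sqrt ‖adjoint T ∘L T - 1‖
open scoped InnerProductSpace in
/-- An upper triangular block operator [[V, √(1−q)E₀],[0, √q X₀]] with V, E₀, X₀
isometries and ran E₀ ⊥ ran V is a 2-isometry. -/
theorem block_twoIsometry {H₁ H₂ : Type*} [NormedAddCommGroup H₁] [InnerProductSpace ℂ H₁]
    [CompleteSpace H₁] [NormedAddCommGroup H₂] [InnerProductSpace ℂ H₂] [CompleteSpace H₂]
    (V : H₁ →L[ℂ] H₁) (E₀ : H₂ →L[ℂ] H₁) (X₀ : H₂ →L[ℂ] H₂) (q : ℝ)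
    (hq0 : 0 < q) (hq1 : q < 1)
    (hV : ∀ x : H₁, ‖V x‖ = ‖x‖) (hE : ∀ y : H₂, ‖E₀ y‖ = ‖y‖)
    (hX : ∀ y : H₂, ‖X₀ y‖ = ‖y‖)
    (horth : ∀ (x : H₁) (y : H₂), ⟪V x, E₀ y⟫_ℂ = 0)
    (T : WithLp 2 (H₁ × H₂) →L[ℂ] WithLp 2 (H₁ × H₂))
    (hT : ∀ (x : H₁) (y : H₂),
      T ((WithLp.equiv 2 (H₁ × H₂)).symm (x, y)) =
        (WithLp.equiv 2 (H₁ × H₂)).symm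
          (V x + Real.sqrt (1 - q) • E₀ y, Real.sqrt q • X₀ y)) :
    ∀ h, ‖h‖ ^ 2 - 2 * ‖T h‖ ^ 2 + ‖T (T h)‖ ^ 2 = 0 := by
  have key : ∀ h : WithLp 2 (H₁ × H₂), ‖T h‖ ^ 2 = ‖h‖ ^ 2 := by
    intro h
    have hh : h = (WithLp.equiv 2 (H₁ × H₂)).symm (h.fst, h.snd) := rfl
    rw [hh, hT h.fst h.snd]
    rw [WithLp.prod_norm_sq_eq_of_L2, WithLp.prod_norm_sq_eq_of_L2]
    have hfst : ((WithLp.equiv 2 (H₁ × H₂)).symm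
        (V h.fst + Real.sqrt (1 - q) • E₀ h.snd, Real.sqrt q • X₀ h.snd)).fst
        = V h.fst + Real.sqrt (1 - q) • E₀ h.snd := rfl
    have hsnd : ((WithLp.equiv 2 (H₁ × H₂)).symm
        (V h.fst + Real.sqrt (1 - q) • E₀ h.snd, Real.sqrt q • X₀ h.snd)).snd
        = Real.sqrt q • X₀ h.snd := rfl
    rw [hfst, hsnd,
      show ((WithLp.equiv 2 (H₁ × H₂)).symm (h.fst, h.snd)).fst = h.fst from rfl,
      show ((WithLp.equiv 2 (H₁ × H₂)).symm (h.fst, h.snd)).snd = h.snd from rfl]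
    simp only [pow_two]
    have horth' : ⟪V h.fst, Real.sqrt (1 - q) • E₀ h.snd⟫_ℂ = 0 := by
      rw [show (Real.sqrt (1 - q) • E₀ h.snd) = ((Real.sqrt (1 - q) : ℂ)) • E₀ h.snd by
        simp [Complex.real_smul]]
      rw [inner_smul_right, horth]
      simp
    rw [norm_add_sq_eq_norm_sq_add_norm_sq_of_inner_eq_zero _ _ horth']
    rw [norm_smul, norm_smul, hV, hE, hX]
    have h1 : ‖Real.sqrt (1 - q)‖ = Real.sqrt (1 - q) := by
      rw [Real.norm_eq_abs, abs_of_nonneg (Real.sqrt_nonneg _)]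
    have h2 : ‖Real.sqrt q‖ = Real.sqrt q := by
      rw [Real.norm_eq_abs, abs_of_nonneg (Real.sqrt_nonneg _)]
    rw [h1, h2]
    have h3 : Real.sqrt (1 - q) * Real.sqrt (1 - q) = 1 - q := Real.mul_self_sqrt (by linarith)
    have h4 : Real.sqrt q * Real.sqrt q = q := Real.mul_self_sqrt (by linarith)
    nlinarith [h3, h4]
  intro h
  rw [key (T h), key h]
  ring
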